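/- In the augmented graph G^{E+} for a known edge e = (w, z): if π_{−e} is an unblocked path that starts z* ← w and continues with π_w, and there is no corresponding unblocked path π_e = z* ← z ← w followed by π_w, then π_w (and hence π_{−e}) passes through the node z. -/

import Mathlib

/-! Framework for mixed graphs (directed + bidirected edges), paths, d-separation,
and Wright's rules, following Chen, Pearl & Bareinboim. -/

/-- A mixed graph: directed and bidirected edges. -/
structure MixedGraph (V : Type) where
  dir : V → V → Prop
  bidir : V → V → Prop
  bidir_symm : ∀ {a b}, bidir a b → bidir b a

namespace MixedGraph

variable {V : Type} {G : MixedGraph V}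

/-- Walks in a mixed graph: at each step we traverse a directed edge forwards
(`consDir`), a directed edge backwards (`consRev`), or a bidirected edge (`consBi`). -/
inductive Walk (G : MixedGraph V) : V → V → Type
  | nil (v : V) : Walk G v v
  | consDir {a b c : V} (e : G.dir a b) (w : Walk G b c) : Walk G a c
  | consRev {a b c : V} (e : G.dir b a) (w : Walk G b c) : Walk G a c
  | consBi {a b c : V} (e : G.bidir a b) (w : Walk G b c) : Walk G a c

namespace Walk

/-- The list of vertices visited by a walk. -/
def support : {a b : V} → Walk G a b → List V
  | _, _, .nil v => [v]
  | a, _, .consDir _ w => a :: support w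
  | a, _, .consRev _ w => a :: support w
  | a, _, .consBi _ w => a :: support w

/-- Whether the first edge of the walk points into its starting vertex. -/
def firstIntoStart : {a b : V} → Walk G a b → Prop
  | _, _, .nil _ => False
  | _, _, .consDir _ _ => False
  | _, _, .consRev _ _ => True
  | _, _, .consBi _ _ => True

/-- A walk is unblocked (given the empty conditioning set) if it has no colliders:
no internal vertex has both adjacent edges pointing into it. -/
def Unblocked : {a b : V} → Walk G a b → Prop
  | _, _, .nil _ => True
  | _, _, .consDir _ w => ¬ firstIntoStart w ∧ Unblocked w
  | _, _, .consRev _ w => Unblocked w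
  | _, _, .consBi _ w => ¬ firstIntoStart w ∧ Unblocked w

/-- An unblocked path: an unblocked walk visiting no vertex twice. -/
def IsUnblockedPath {a b : V} (w : Walk G a b) : Prop :=
  w.Unblocked ∧ w.support.Nodup

/-- A directed walk (all edges traversed forwards). -/
def Directed : {a b : V} → Walk G a b → Prop
  | _, _, .nil _ => True
  | _, _, .consDir _ w => Directed w
  | _, _, .consRev _ _ => False
  | _, _, .consBi _ _ => False

/-- A half-trek: a directed path, or a bidirected edge followed by a directed path. -/
def HalfTrek : {a b : V} → Walk G a b → Prop
  | _, _, .nil _ => True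
  | _, _, .consDir _ w => Directed w
  | _, _, .consRev _ _ => False
  | _, _, .consBi _ w => Directed w

/-- The product of parameters along a walk: directed edges contribute the structural
coefficient `lam`, bidirected edges the error covariance `om`. -/
def weight (lam om : V → V → ℝ) : {a b : V} → Walk G a b → ℝ
  | _, _, .nil _ => 1
  | _, _, .consDir (a := a) (b := b) _ w => lam a b * weight lam om w
  | _, _, .consRev (a := a) (b := b) _ w => lam b a * weight lam om w
  | _, _, .consBi (a := a) (b := b) _ w => om a b * weight lam om w

/-- Auxiliary: vertices with a directed edge on the walk leaving them towards the start. -/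
def leftAux : {a b : V} → Walk G a b → Set V
  | _, _, .nil _ => ∅
  | _, _, .consDir _ w => leftAux w
  | _, _, .consRev (b := b) _ w => insert b (leftAux w)
  | _, _, .consBi _ w => leftAux w

/-- Auxiliary: vertices with a directed edge on the walk leaving them towards the end. -/
def rightAux : {a b : V} → Walk G a b → Set V
  | _, _, .nil _ => ∅
  | _, _, .consDir (a := a) _ w => insert a (rightAux w)
  | _, _, .consRev _ w => rightAux w
  | _, _, .consBi _ w => rightAux w

/-- Left(π): the start vertex together with all vertices having a directed edge on π
leaving them in the direction of the start. -/
def leftSet {a b : V} (w : Walk G a b) : Set V := insert a (leftAux w)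

/-- Right(π): the end vertex together with all vertices having a directed edge on π
leaving them in the direction of the end. -/
def rightSet {a b : V} (w : Walk G a b) : Set V := insert b (rightAux w)

/-- The directed edge (s,t) occurs on the walk (in either traversal direction). -/
def edgeOn (s t : V) : {a b : V} → Walk G a b → Prop
  | _, _, .nil _ => False
  | _, _, .consDir (a := a) (b := b) _ w => (a = s ∧ b = t) ∨ edgeOn s t w
  | _, _, .consRev (a := a) (b := b) _ w => (b = s ∧ a = t) ∨ edgeOn s t w
  | _, _, .consBi _ w => edgeOn s t w

end Walk

/-- d-separation of `a` and `b` (given the empty set): no unblocked path joins them. -/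
def DSep (G : MixedGraph V) (a b : V) : Prop :=
  ∀ w : Walk G a b, ¬ w.IsUnblockedPath

/-- The Wright's-rules expression for the covariance of `a` and `b`: the sum over
unblocked paths between `a` and `b` of the products of parameters along them. -/
noncomputable def wrightCov (G : MixedGraph V) (lam om : V → V → ℝ) (a b : V) : ℝ :=
  ∑' p : {w : Walk G a b // w.IsUnblockedPath}, p.1.weight lam om

/-- Delete a set of directed edges from a graph. -/
def delDir (G : MixedGraph V) (E : Set (V × V)) : MixedGraph V where
  dir a b := G.dir a b ∧ (a, b) ∉ E
  bidir := G.bidir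
  bidir_symm := G.bidir_symm

/-- The augmented graph adding one auxiliary node (`Sum.inr ()`), with directed
edges into it from every vertex in `S` and no other new edges. -/
def augment (G : MixedGraph V) (S : Set V) : MixedGraph (V ⊕ Unit) where
  dir p q := (∃ a b, p = .inl a ∧ q = .inl b ∧ G.dir a b) ∨
    (∃ a, p = .inl a ∧ q = .inr () ∧ a ∈ S)
  bidir p q := ∃ a b, p = .inl a ∧ q = .inl b ∧ G.bidir a b
  bidir_symm := by
    rintro p q ⟨a, b, rfl, rfl, h⟩
    exact ⟨b, a, rfl, rfl, G.bidir_symm h⟩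

/-- The augmented graph adding one auxiliary node for each element of an index type
`Z` (embedded in `V` via `emb`), with directed edges into the node `Sum.inr i` from
`emb i` and from the vertices in `par i`, and no other new edges. -/
def augmentMany (G : MixedGraph V) {Z : Type} (emb : Z → V) (par : Z → Set V) :
    MixedGraph (V ⊕ Z) where
  dir p q := (∃ a b, p = .inl a ∧ q = .inl b ∧ G.dir a b) ∨
    (∃ a i, p = .inl a ∧ q = .inr i ∧ (a = emb i ∨ a ∈ par i))
  bidir p q := ∃ a b, p = .inl a ∧ q = .inl b ∧ G.bidir a b
  bidir_symm := by
    rintro p q ⟨a, b, rfl, rfl, h⟩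
    exact ⟨b, a, rfl, rfl, G.bidir_symm h⟩

/-- Embedding of walks of `G` into an augmented graph of `G`. -/
def Walk.mapAug {S : Set V} : {a b : V} → Walk G a b →
    Walk (G.augment S) (.inl a) (.inl b)
  | _, _, .nil v => .nil _
  | _, _, .consDir (a := a) (b := b) e w => .consDir (Or.inl ⟨a, b, rfl, rfl, e⟩) w.mapAug
  | _, _, .consRev (a := a) (b := b) e w => .consRev (Or.inl ⟨b, a, rfl, rfl, e⟩) w.mapAug
  | _, _, .consBi (a := a) (b := b) e w => .consBi ⟨a, b, rfl, rfl, e⟩ w.mapAug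

end MixedGraph

namespace MixedGraph.Walk

theorem support_mapAug {V : Type} {G : MixedGraph V} {S : Set V} :
    ∀ {a b : V} (w : Walk G a b), (w.mapAug (S := S)).support = w.support.map Sum.inl
  | _, _, .nil v => rfl
  | _, _, .consDir e w => by simp [mapAug, support, support_mapAug w]
  | _, _, .consRev e w => by simp [mapAug, support, support_mapAug w]
  | _, _, .consBi e w => by simp [mapAug, support, support_mapAug w]

theorem unblocked_mapAug {V : Type} {G : MixedGraph V} {S : Set V} :
    ∀ {a b : V} (w : Walk G a b), w.Unblocked → (w.mapAug (S := S)).Unblocked := by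
  intro a b w
  induction w with
  | nil => exact fun h => h
  | consDir e w ih =>
    rintro ⟨h1, h2⟩
    refine ⟨?_, ih h2⟩
    cases w <;> simp_all [mapAug, firstIntoStart]
  | consRev e w ih => exact fun h => ih h
  | consBi e w ih =>
    rintro ⟨h1, h2⟩
    refine ⟨?_, ih h2⟩
    cases w <;> simp_all [mapAug, firstIntoStart]

end MixedGraph.Walk

open MixedGraph Walk in
/-- Lemma 7: in the augmented graph for the known edge e = (w, z), if
π_{−e} = z* ← w followed by π_w is an unblocked path but the corresponding walk
π_e = z* ← z ← w followed by π_w is not an unblocked path, then π_w (and hence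
π_{−e}) passes through the node z. -/
theorem excess_path_passes_through_z
    {V : Type} (G : MixedGraph V) (w z t : V)
    (ezs : (G.augment {z, w}).dir (.inl z) (.inr ()))
    (ews : (G.augment {z, w}).dir (.inl w) (.inr ()))
    (ewz : (G.augment {z, w}).dir (.inl w) (.inl z))
    (πw : Walk G w t)
    (hme : (Walk.consRev ews πw.mapAug).IsUnblockedPath)
    (hnot : ¬ (Walk.consRev ezs (Walk.consRev ewz πw.mapAug)).IsUnblockedPath) :
    z ∈ πw.support := by
  by_contra hz
  apply hnot
  obtain ⟨hub, hnd⟩ := hme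
  constructor
  · -- unblockedness of π_e reduces to unblockedness of πw.mapAug
    exact hub
  · -- support nodup
    have hsup : (Walk.consRev ezs (Walk.consRev ewz πw.mapAug)).support
        = Sum.inr () :: Sum.inl z :: πw.mapAug.support := rfl
    rw [hsup, support_mapAug]
    have hnd' : πw.support.Nodup := by
      have : (Walk.consRev ews πw.mapAug).support
          = Sum.inr () :: πw.mapAug.support := rfl
      rw [this, support_mapAug] at hnd
      exact (List.nodup_cons.mp hnd).2.of_map _
    simp only [List.nodup_cons, List.mem_cons, List.mem_map]
    refine ⟨?_, ?_, hnd'.map Sum.inl_injective⟩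
    · rintro (h | ⟨x, _, h⟩) <;> exact nomatch h
    · rintro ⟨x, hx, h⟩
      exact hz (Sum.inl_injective h ▸ hx)
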